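/- Let G be a Polish group and W ⊆ G a countably syndetic symmetric set. Then there exists a nonempty open set U in G (which can be taken to be a neighborhood of the identity) such that W² = {w₁w₂ : w₁, w₂ ∈ W} is dense in U. -/

import Mathlib

open scoped Pointwise

/-- In a Polish group, the square of a countably syndetic symmetric set is dense
in some open neighborhood of the identity. -/
theorem countably_syndetic_sq_dense_in_nhd (G : Type*) [Group G] [TopologicalSpace G]
    [IsTopologicalGroup G] [PolishSpace G] (W : Set G)
    (hsym : W⁻¹ = W) (hsynd : ∃ g : ℕ → G, (⋃ n, g n • W) = Set.univ) :
    ∃ U : Set G, IsOpen U ∧ (1 : G) ∈ U ∧ U ⊆ closure (W * W) := by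
  letI := TopologicalSpace.upgradeIsCompletelyMetrizable G
  obtain ⟨g, hg⟩ := hsynd
  have hg' : (⋃ n, closure (g n • W)) = Set.univ :=
    Set.eq_univ_of_univ_subset (hg ▸ Set.iUnion_mono fun n => subset_closure)
  obtain ⟨n, hn⟩ := nonempty_interior_of_iUnion_of_closed (fun n => isClosed_closure) hg'
  have hV : (interior (closure W)).Nonempty := by
    rw [closure_smul, interior_smul] at hn
    exact (Set.smul_set_nonempty).1 hn
  obtain ⟨x, hx⟩ := hV
  set V := interior (closure W) with hVdef
  have hVsub : V ⊆ closure W := interior_subset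
  refine ⟨V⁻¹ * V, (isOpen_interior.inv).mul_right, ?_, ?_⟩
  · exact ⟨x⁻¹, Set.inv_mem_inv.2 hx, x, hx, inv_mul_cancel x⟩
  · rintro z ⟨a, ha, b, hb, rfl⟩
    have ha' : a ∈ closure W := by
      have : a⁻¹ ∈ closure W := hVsub (Set.mem_inv.1 ha)
      have : a ∈ (closure W)⁻¹ := by simpa using Set.inv_mem_inv.2 this
      rwa [inv_closure, hsym] at this
    have hb' : b ∈ closure W := hVsub hb
    exact map_mem_closure₂ continuous_mul ha' hb' fun x hx y hy => Set.mul_mem_mul hx hy
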